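/- With A and π_r as above, the lowest weight vector e_0 of π_r satisfies F e_0 = 0 and K e_0 = q^{-r} e_0, and every irreducible admissible *-representation of A in which K has positive spectrum and F acts locally finitely is determined up to unitary equivalence by its lowest weight q^{-r}; distinct r give inequivalent representations. -/

import Mathlib

noncomputable section

open Finsupp

variable (q : ℝ)

/-- The diagonal operator `K e_n = q^{-r+2n} e_n` on `ℂ[ℕ]`. -/
def Kop (r : ℝ) : (ℕ →₀ ℂ) →ₗ[ℂ] (ℕ →₀ ℂ) :=
  Finsupp.lsum ℂ fun n => LinearMap.toSpanSingleton ℂ _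
    (((q ^ (-r + 2 * (n : ℝ)) : ℝ) : ℂ) • Finsupp.single n 1)

/-- The coefficient in the action of `F` in the representation `π_r`. -/
def Fcoef (r : ℝ) (n : ℕ) : ℝ :=
  q ^ (-(n : ℝ)) * Real.sqrt ((1 - q ^ (2 * (n : ℝ))) * (1 + q ^ (2 * r + 2 - 2 * (n : ℝ)))) /
    (q ^ ((1 : ℝ) / 2) * (q⁻¹ - q))

/-- The lowering operator `F e_n = c_n e_{n-1}` (with `c_0 = 0`). -/
def Fop (r : ℝ) : (ℕ →₀ ℂ) →ₗ[ℂ] (ℕ →₀ ℂ) :=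
  Finsupp.lsum ℂ fun n => LinearMap.toSpanSingleton ℂ _
    (((Fcoef q r n : ℝ) : ℂ) • Finsupp.single (n - 1) 1)

/-- An admissible irreducible `*`-representation of the universal `*`-algebra `A`
generated by `F` and a positive invertible self-adjoint `K` with relations
`KF = q⁻²FK`, `KF* = q²F*K`, `F*F − q²FF* = (1 + K⁻²)/(q − q⁻¹)`: a pre-Hilbert
ℂ-module with operators `K, K⁻¹, F, F*` satisfying the relations and adjointness,
`K` acting semisimply with positive eigenvalues, `F` acting locally finitely,
with no proper invariant subspaces. -/
def IsAdmRep (V : Type*) [AddCommGroup V] [Module ℂ V] (inner : V → V → ℂ)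
    (K Kinv F Fs : V →ₗ[ℂ] V) : Prop :=
  (∀ u v w : V, inner u (v + w) = inner u v + inner u w) ∧
  (∀ (c : ℂ) (u v : V), inner u (c • v) = c * inner u v) ∧
  (∀ u v : V, starRingEnd ℂ (inner u v) = inner v u) ∧
  (∀ v : V, v ≠ 0 → 0 < (inner v v).re ∧ (inner v v).im = 0) ∧
  (∀ v : V, K (F v) = ((q : ℂ) ^ (-2 : ℤ)) • F (K v)) ∧
  (∀ v : V, K (Fs v) = ((q : ℂ) ^ 2) • Fs (K v)) ∧
  (∀ v : V, Fs (F v) - ((q : ℂ) ^ 2) • F (Fs v) =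
    (((q - q⁻¹ : ℝ)⁻¹ : ℝ) : ℂ) • (v + Kinv (Kinv v))) ∧
  (∀ v : V, K (Kinv v) = v) ∧ (∀ v : V, Kinv (K v) = v) ∧
  (∀ v w : V, inner v (F w) = inner (Fs v) w) ∧
  (∀ v w : V, inner v (K w) = inner (K v) w) ∧
  ((⨆ c : {c : ℝ // 0 < c}, Module.End.eigenspace K ((c : ℝ) : ℂ)) = ⊤) ∧
  (∀ v : V, ∃ W : Submodule ℂ V, FiniteDimensional ℂ W ∧ v ∈ W ∧ ∀ w ∈ W, F w ∈ W) ∧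
  (∃ v : V, v ≠ 0) ∧
  (∀ W : Submodule ℂ V,
    (∀ w ∈ W, K w ∈ W ∧ Kinv w ∈ W ∧ F w ∈ W ∧ Fs w ∈ W) → W = ⊥ ∨ W = ⊤)



namespace LWC

/-- recursive lowering coefficients -/
def lam (q m : ℝ) : ℕ → ℝ
  | 0 => 0
  | n + 1 => (q ^ 2)⁻¹ * (lam q m n - (q - q⁻¹)⁻¹ * (1 + ((q ^ (2 * n) * m) ^ 2)⁻¹))

/-- squared norms ratio -/
def Nr (q m : ℝ) : ℕ → ℝ
  | 0 => 1
  | n + 1 => lam q m (n + 1) * Nr q m n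

theorem lam_nonneg {q m : ℝ} (hq0 : 0 < q) (hq1 : q < 1) (hm : m ≠ 0) :
    ∀ n, 0 ≤ lam q m n ∧ 0 < lam q m (n + 1) := by
  have hqne : q ≠ 0 := hq0.ne'
  have hc : (q - q⁻¹)⁻¹ < 0 := by
    have h1 : (1:ℝ) < q⁻¹ := (one_lt_inv₀ hq0).mpr hq1
    have : q - q⁻¹ < 0 := by linarith
    exact inv_neg''.mpr this
  have key : ∀ n, 0 ≤ lam q m n → 0 < lam q m (n + 1) := by
    intro n hn
    rw [lam]
    have hx : (0:ℝ) < 1 + ((q ^ (2 * n) * m) ^ 2)⁻¹ := by positivity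
    have : 0 < lam q m n - (q - q⁻¹)⁻¹ * (1 + ((q ^ (2 * n) * m) ^ 2)⁻¹) := by nlinarith
    positivity
  intro n
  induction n with
  | zero => exact ⟨le_of_eq rfl, key 0 (le_of_eq rfl)⟩
  | succ n ih => exact ⟨(key n ih.1).le, key (n + 1) (key n ih.1).le⟩

theorem lam_pos {q m : ℝ} (hq0 : 0 < q) (hq1 : q < 1) (hm : m ≠ 0) (n : ℕ) :
    0 < lam q m (n + 1) := (lam_nonneg hq0 hq1 hm n).2

theorem Nr_pos {q m : ℝ} (hq0 : 0 < q) (hq1 : q < 1) (hm : m ≠ 0) (n : ℕ) :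
    0 < Nr q m n := by
  induction n with
  | zero => norm_num [Nr]
  | succ n ih => rw [Nr]; exact mul_pos (lam_pos hq0 hq1 hm n) ih

/-- derived sesquilinearity on the left -/
theorem inner_left {V : Type*} [AddCommGroup V] [Module ℂ V] {ip : V → V → ℂ}
    (addR : ∀ u v w : V, ip u (v + w) = ip u v + ip u w)
    (smulR : ∀ (c : ℂ) (u v : V), ip u (c • v) = c * ip u v)
    (conjsym : ∀ u v : V, starRingEnd ℂ (ip u v) = ip v u) :
    (∀ (c : ℂ) (u w : V), ip (c • u) w = (starRingEnd ℂ) c * ip u w) ∧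
    (∀ u u' w : V, ip (u + u') w = ip u w + ip u' w) ∧
    (∀ u : V, ip u 0 = 0) ∧ (∀ u : V, ip 0 u = 0) := by
  have hzr : ∀ u : V, ip u 0 = 0 := by
    intro u
    have := smulR 0 u 0
    simpa using this
  refine ⟨?_, ?_, hzr, ?_⟩
  · intro c u w
    calc ip (c • u) w = starRingEnd ℂ (starRingEnd ℂ (ip (c • u) w)) := by
          rw [Complex.conj_conj]
      _ = starRingEnd ℂ (ip w (c • u)) := by rw [conjsym]
      _ = starRingEnd ℂ (c * ip w u) := by rw [smulR]
      _ = starRingEnd ℂ c * starRingEnd ℂ (ip w u) := by rw [map_mul]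
      _ = starRingEnd ℂ c * ip u w := by rw [conjsym]
  · intro u u' w
    calc ip (u + u') w = starRingEnd ℂ (starRingEnd ℂ (ip (u + u') w)) := by
          rw [Complex.conj_conj]
      _ = starRingEnd ℂ (ip w (u + u')) := by rw [conjsym]
      _ = starRingEnd ℂ (ip w u + ip w u') := by rw [addR]
      _ = starRingEnd ℂ (ip w u) + starRingEnd ℂ (ip w u') := by rw [map_add]
      _ = ip u w + ip u' w := by rw [conjsym, conjsym]
  · intro u
    have := conjsym u 0
    rw [hzr] at this
    simpa using this.symm

end LWC

namespace LWC

theorem rep_structure {q : ℝ} (hq0 : 0 < q) (hq1 : q < 1)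
    {V : Type*} [AddCommGroup V] [Module ℂ V]
    {ip : V → V → ℂ} {K Kinv F Fs : V →ₗ[ℂ] V}
    (h : IsAdmRep q V ip K Kinv F Fs)
    {v : V} {m : ℝ} (hv : v ≠ 0) (hm : m ≠ 0)
    (hFv : F v = 0) (hKv : K v = (m : ℂ) • v) :
    ∃ b : Module.Basis ℕ ℂ V,
      b 0 = v ∧
      (∀ n, K (b n) = ((q ^ (2 * n) * m : ℝ) : ℂ) • b n) ∧
      F (b 0) = 0 ∧
      (∀ n, F (b (n + 1)) = ((lam q m (n + 1) : ℝ) : ℂ) • b n) ∧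
      (∀ n, Fs (b n) = b (n + 1)) ∧
      (∀ i j, ip (b i) (b j) =
        if i = j then ((Nr q m i : ℝ) : ℂ) * ip v v else 0) := by
  obtain ⟨addR, smulR, conjsym, pos, hKF, hKFs, hrel, hKKinv, hKinvK, hadjF, hadjK,
    hsemis, hlocfin, hne, hirr⟩ := h
  obtain ⟨smulL, addL, zeroR, zeroL⟩ := inner_left addR smulR conjsym
  have hqne : q ≠ 0 := hq0.ne'
  have hIvv : ip v v ≠ 0 := by
    intro h0
    have := (pos v hv).1
    rw [h0] at this
    simp at this
  -- the eigenvalue sequence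
  set μr : ℕ → ℝ := fun n => q ^ (2 * n) * m with hμr
  have hμne : ∀ n, μr n ≠ 0 := fun n => mul_ne_zero (pow_ne_zero _ hqne) hm
  have hμinj : Function.Injective μr := by
    have hmono : StrictAnti (fun n : ℕ => q ^ n) := fun i j hij =>
      pow_lt_pow_right_of_lt_one₀ hq0 hq1 hij
    intro i j hij
    have : q ^ (2 * i) = q ^ (2 * j) := by
      replace hij : q ^ (2 * i) = q ^ (2 * j) ∨ m = 0 := mul_eq_mul_right_iff.mp hij
      rcases hij with h' | h' 
      · exact h'
      · exact absurd h' hm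
    have := hmono.injective this
    omega
  -- the vectors
  set e : ℕ → V := fun n => (Fs ^ n) v with he
  have he0 : e 0 = v := by simp [he]
  have hes : ∀ n, e (n + 1) = Fs (e n) := by
    intro n
    show (Fs ^ (n + 1)) v = Fs ((Fs ^ n) v)
    rw [pow_succ']
    rfl
  have hKe : ∀ n, K (e n) = ((μr n : ℝ) : ℂ) • e n := by
    intro n
    induction n with
    | zero => simpa [he0, hμr] using hKv
    | succ n ih =>
      rw [hes, hKFs, ih, map_smul, smul_smul, ← hes]
      congr 1
      show ((q:ℂ))^2 * ((q ^ (2*n) * m : ℝ):ℂ) = ((q ^ (2*(n+1)) * m : ℝ):ℂ)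
      push_cast
      ring
  have hKinve : ∀ n, Kinv (e n) = (((μr n)⁻¹ : ℝ) : ℂ) • e n := by
    intro n
    have h1 : K ((((μr n)⁻¹ : ℝ) : ℂ) • e n) = e n := by
      rw [map_smul, hKe, smul_smul]
      have : (((μr n)⁻¹ : ℝ) : ℂ) * ((μr n : ℝ) : ℂ) = 1 := by
        rw [← Complex.ofReal_mul, inv_mul_cancel₀ (hμne n)]
        simp
      rw [this, one_smul]
    calc Kinv (e n) = Kinv (K ((((μr n)⁻¹ : ℝ) : ℂ) • e n)) := by rw [h1]
      _ = (((μr n)⁻¹ : ℝ) : ℂ) • e n := hKinvK _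
  have hFe : ∀ n, F (e n) = ((lam q m n : ℝ) : ℂ) • e (n - 1) := by
    intro n
    induction n with
    | zero => simp [lam, he0, hFv]
    | succ n ih =>
      have hrel' := hrel (e n)
      have h2 : Fs (F (e n)) = ((lam q m n : ℝ) : ℂ) • e n := by
        rw [ih, map_smul]
        cases n with
        | zero => simp [lam]
        | succ k => rw [Nat.succ_sub_one, hes]
      rw [h2, hKinve, map_smul, hKinve, smul_smul, ← hes] at hrel'
      have hq2 : ((q : ℂ) ^ 2) ≠ 0 := pow_ne_zero _ (by exact_mod_cast hqne)
      have h3 : (q : ℂ) ^ 2 • F (e (n + 1)) =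
          ((lam q m n : ℝ) : ℂ) • e n -
            (((q - q⁻¹ : ℝ)⁻¹ : ℝ) : ℂ) • (e n + ((((μr n)⁻¹ : ℝ) : ℂ) * (((μr n)⁻¹ : ℝ) : ℂ)) • e n) := by
        rw [← hrel']
        abel
      have h4 : F (e (n + 1)) = ((q : ℂ) ^ 2)⁻¹ • ((q : ℂ) ^ 2 • F (e (n + 1))) := by
        rw [smul_smul, inv_mul_cancel₀ hq2, one_smul]
      rw [h4, h3]
      have hl : (lam q m (n + 1) : ℝ) =
          (q ^ 2)⁻¹ * (lam q m n - (q - q⁻¹)⁻¹ * (1 + ((μr n)⁻¹ * (μr n)⁻¹))) := by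
        rw [lam]
        congr 2
        rw [hμr]
        ring
      rw [Nat.succ_sub_one, hl]
      push_cast
      module
  have hNorm : ∀ n, ip (e n) (e n) = ((Nr q m n : ℝ) : ℂ) * ip v v := by
    intro n
    induction n with
    | zero => simp [Nr, he0]
    | succ n ih =>
      have h1 : ip (e (n + 1)) (e (n + 1)) = ip (e n) (F (e (n + 1))) := by
        rw [hadjF, ← hes]
      rw [h1, hFe, Nat.succ_sub_one, smulR, ih, Nr]
      push_cast
      ring
  have e_ne : ∀ n, e n ≠ 0 := by
    intro n hn
    have h1 := hNorm n
    rw [hn, zeroL] at h1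
    have h2 : ((Nr q m n : ℝ) : ℂ) ≠ 0 := by
      exact_mod_cast (Nr_pos hq0 hq1 hm n).ne'
    exact (mul_ne_zero h2 hIvv) h1.symm
  have hOrth : ∀ i j, i ≠ j → ip (e i) (e j) = 0 := by
    intro i j hij
    have h1 : ip (e i) (K (e j)) = ip (K (e i)) (e j) := hadjK _ _
    rw [hKe, hKe, smulR, smulL] at h1
    rw [Complex.conj_ofReal] at h1
    have h2 : (((μr j : ℝ) : ℂ) - ((μr i : ℝ) : ℂ)) * ip (e i) (e j) = 0 := by
      rw [sub_mul, h1, sub_self]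
    rcases mul_eq_zero.mp h2 with h3 | h3
    · exfalso
      apply hij
      apply hμinj
      have : (μr j : ℂ) = (μr i : ℂ) := by
        have := sub_eq_zero.mp h3
        exact this
      exact (Complex.ofReal_injective this).symm
    · exact h3
  have indep : LinearIndependent ℂ e := by
    apply Module.End.eigenvectors_linearIndependent' K (fun n => ((μr n : ℝ) : ℂ))
    · intro i j hij
      exact hμinj (Complex.ofReal_injective hij)
    · intro n
      exact ⟨Module.End.mem_eigenspace_iff.mpr (hKe n), e_ne n⟩
  have hsp : ⊤ ≤ Submodule.span ℂ (Set.range e) := by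
    set W := Submodule.span ℂ (Set.range e) with hW
    have hmem : ∀ n, e n ∈ W := fun n => Submodule.subset_span ⟨n, rfl⟩
    have hmap : ∀ (T : V →ₗ[ℂ] V), (∀ n, T (e n) ∈ W) → ∀ w ∈ W, T w ∈ W := by
      intro T hT w hw
      refine Submodule.span_induction (p := fun x _ => T x ∈ W)
        (fun x hx => ?_) (by show T 0 ∈ W; rw [map_zero]; exact W.zero_mem)
        (fun x y _ _ hx hy => by show T (x + y) ∈ W; rw [map_add]; exact W.add_mem hx hy)
        (fun a x _ hx => by show T (a • x) ∈ W; rw [map_smul]; exact W.smul_mem a hx) hw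
      obtain ⟨n, rfl⟩ := hx
      exact hT n
    have hWinv : ∀ w ∈ W, K w ∈ W ∧ Kinv w ∈ W ∧ F w ∈ W ∧ Fs w ∈ W := by
      intro w hw
      refine ⟨hmap K (fun n => ?_) w hw, hmap Kinv (fun n => ?_) w hw,
        hmap F (fun n => ?_) w hw, hmap Fs (fun n => ?_) w hw⟩
      · rw [hKe]; exact W.smul_mem _ (hmem n)
      · rw [hKinve]; exact W.smul_mem _ (hmem n)
      · rw [hFe]; exact W.smul_mem _ (hmem _)
      · rw [← hes]; exact hmem _
    rcases hirr W hWinv with hbot | htop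
    · exfalso
      apply hv
      have : e 0 ∈ W := hmem 0
      rw [hbot] at this
      rw [← he0]
      simpa using this
    · rw [htop]
  refine ⟨Module.Basis.mk indep hsp, ?_, ?_, ?_, ?_, ?_, ?_⟩ <;>
    simp only [Module.Basis.coe_mk]
  · exact he0
  · exact hKe
  · rw [he0]; exact hFv
  · intro n
    have := hFe (n + 1)
    rwa [Nat.succ_sub_one] at this
  · intro n; rw [hes]
  · intro i j
    by_cases hij : i = j
    · subst hij; rw [if_pos rfl]; exact hNorm i
    · rw [if_neg hij]; exact hOrth i j hij

end LWC

namespace LWC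

theorem mu_real {q : ℝ}
    {V : Type*} [AddCommGroup V] [Module ℂ V]
    {ip : V → V → ℂ} {K Kinv F Fs : V →ₗ[ℂ] V}
    (h : IsAdmRep q V ip K Kinv F Fs)
    {v : V} {μ : ℂ} (hv : v ≠ 0) (hKv : K v = μ • v) :
    μ = ((μ.re : ℝ) : ℂ) ∧ μ.re ≠ 0 := by
  obtain ⟨addR, smulR, conjsym, pos, hKF, hKFs, hrel, hKKinv, hKinvK, hadjF, hadjK,
    hsemis, hlocfin, hne, hirr⟩ := h
  obtain ⟨smulL, addL, zeroR, zeroL⟩ := inner_left addR smulR conjsym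
  have hIvv : ip v v ≠ 0 := by
    intro h0
    have := (pos v hv).1
    rw [h0] at this
    simp at this
  have h1 : ip v (K v) = ip (K v) v := hadjK v v
  rw [hKv, smulR, smulL] at h1
  have h2 : μ = starRingEnd ℂ μ := by
    exact mul_right_cancel₀ hIvv h1
  have hreal : μ = ((μ.re : ℝ) : ℂ) := (Complex.conj_eq_iff_re.mp h2.symm).symm
  have hμ0 : μ ≠ 0 := by
    intro h0
    apply hv
    have := hKinvK v
    rw [hKv, h0, zero_smul, map_zero] at this
    exact this.symm
  refine ⟨hreal, fun hre => hμ0 ?_⟩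
  rw [hreal, hre]
  simp

theorem equiv_of_same_weight {q : ℝ} (hq0 : 0 < q) (hq1 : q < 1)
    {V₁ : Type*} [AddCommGroup V₁] [Module ℂ V₁]
    {ip₁ : V₁ → V₁ → ℂ} {K₁ Kinv₁ F₁ Fs₁ : V₁ →ₗ[ℂ] V₁}
    {V₂ : Type*} [AddCommGroup V₂] [Module ℂ V₂]
    {ip₂ : V₂ → V₂ → ℂ} {K₂ Kinv₂ F₂ Fs₂ : V₂ →ₗ[ℂ] V₂}
    (h₁ : IsAdmRep q V₁ ip₁ K₁ Kinv₁ F₁ Fs₁)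
    (h₂ : IsAdmRep q V₂ ip₂ K₂ Kinv₂ F₂ Fs₂)
    (v₁ : V₁) (v₂ : V₂) (μ : ℂ)
    (hv₁ : v₁ ≠ 0) (hF₁ : F₁ v₁ = 0) (hK₁ : K₁ v₁ = μ • v₁)
    (hv₂ : v₂ ≠ 0) (hF₂ : F₂ v₂ = 0) (hK₂ : K₂ v₂ = μ • v₂) :
    ∃ U : V₁ ≃ₗ[ℂ] V₂,
      (∀ v, U (K₁ v) = K₂ (U v)) ∧ (∀ v, U (F₁ v) = F₂ (U v)) ∧
      (∀ v, U (Fs₁ v) = Fs₂ (U v)) ∧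
      (∀ v w, ip₂ (U v) (U w) = ip₁ v w) := by
  obtain ⟨hμre, hμne⟩ := mu_real h₁ hv₁ hK₁
  set m : ℝ := μ.re with hmdef
  have hK₁' : K₁ v₁ = ((m : ℝ) : ℂ) • v₁ := by rw [← hμre]; exact hK₁
  have hK₂' : K₂ v₂ = ((m : ℝ) : ℂ) • v₂ := by rw [← hμre]; exact hK₂
  obtain ⟨b₁, hb₁0, hb₁K, hb₁F0, hb₁F, hb₁Fs, hb₁ip⟩ :=
    rep_structure hq0 hq1 h₁ hv₁ hμne hF₁ hK₁'
  obtain ⟨b₂, hb₂0, hb₂K, hb₂F0, hb₂F, hb₂Fs, hb₂ip⟩ :=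
    rep_structure hq0 hq1 h₂ hv₂ hμne hF₂ hK₂'
  obtain ⟨addR₁, smulR₁, conjsym₁, pos₁, -, -, -, -, -, -, -, -, -, -, -⟩ := h₁
  obtain ⟨addR₂, smulR₂, conjsym₂, pos₂, -, -, -, -, -, -, -, -, -, -, -⟩ := h₂
  obtain ⟨smulL₁, addL₁, zeroR₁, zeroL₁⟩ := inner_left addR₁ smulR₁ conjsym₁
  obtain ⟨smulL₂, addL₂, zeroR₂, zeroL₂⟩ := inner_left addR₂ smulR₂ conjsym₂
  set r₁ : ℝ := (ip₁ v₁ v₁).re with hr₁def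
  set r₂ : ℝ := (ip₂ v₂ v₂).re with hr₂def
  have hr₁pos : 0 < r₁ := (pos₁ v₁ hv₁).1
  have hr₂pos : 0 < r₂ := (pos₂ v₂ hv₂).1
  have hip₁vv : ip₁ v₁ v₁ = ((r₁ : ℝ) : ℂ) := by
    apply Complex.ext
    · simp [hr₁def]
    · simp [(pos₁ v₁ hv₁).2]
  have hip₂vv : ip₂ v₂ v₂ = ((r₂ : ℝ) : ℂ) := by
    apply Complex.ext
    · simp [hr₂def]
    · simp [(pos₂ v₂ hv₂).2]
  set s : ℝ := Real.sqrt (r₁ / r₂) with hsdef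
  have hspos : 0 < s := Real.sqrt_pos.mpr (div_pos hr₁pos hr₂pos)
  have hssq : s * s = r₁ / r₂ := Real.mul_self_sqrt (div_pos hr₁pos hr₂pos).le
  have hsC : ((s : ℝ) : ℂ) ≠ 0 := by exact_mod_cast hspos.ne'
  set su : ℂˣ := Units.mk0 ((s : ℝ) : ℂ) hsC with hsu
  set b₂' : Module.Basis ℕ ℂ V₂ := b₂.unitsSMul (fun _ => su) with hb₂'
  set U : V₁ ≃ₗ[ℂ] V₂ := b₁.equiv b₂' (Equiv.refl ℕ) with hU
  have hUb : ∀ n, U (b₁ n) = ((s : ℝ) : ℂ) • b₂ n := by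
    intro n
    rw [hU, Module.Basis.equiv_apply, hb₂', Module.Basis.unitsSMul_apply]
    rfl
  have hUK : ∀ x, U (K₁ x) = K₂ (U x) := by
    have : (U : V₁ →ₗ[ℂ] V₂).comp K₁ = K₂.comp (U : V₁ →ₗ[ℂ] V₂) :=
      Module.Basis.ext b₁ fun n => by
        simp only [LinearMap.comp_apply, LinearEquiv.coe_coe, hb₁K n, map_smul, hUb n,
          hb₂K n, smul_smul]
        ring_nf
    intro x
    exact LinearMap.congr_fun this x
  have hUF : ∀ x, U (F₁ x) = F₂ (U x) := by
    have : (U : V₁ →ₗ[ℂ] V₂).comp F₁ = F₂.comp (U : V₁ →ₗ[ℂ] V₂) :=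
      Module.Basis.ext b₁ fun n => by
        cases n with
        | zero =>
          simp only [LinearMap.comp_apply, LinearEquiv.coe_coe, hb₁F0, map_zero, hUb 0,
            map_smul, hb₂F0, smul_zero]
        | succ k =>
          simp only [LinearMap.comp_apply, LinearEquiv.coe_coe, hb₁F k, map_smul,
            hUb (k + 1), hUb k, hb₂F k, smul_smul]
          ring_nf
    intro x
    exact LinearMap.congr_fun this x
  have hUFs : ∀ x, U (Fs₁ x) = Fs₂ (U x) := by
    have : (U : V₁ →ₗ[ℂ] V₂).comp Fs₁ = Fs₂.comp (U : V₁ →ₗ[ℂ] V₂) :=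
      Module.Basis.ext b₁ fun n => by
        simp only [LinearMap.comp_apply, LinearEquiv.coe_coe, hb₁Fs n, hUb (n + 1), hUb n,
          map_smul, hb₂Fs n]
    intro x
    exact LinearMap.congr_fun this x
  refine ⟨U, hUK, hUF, hUFs, ?_⟩
  -- inner product preservation
  have hbase : ∀ i j, ip₂ (U (b₁ i)) (U (b₁ j)) = ip₁ (b₁ i) (b₁ j) := by
    intro i j
    rw [hUb i, hUb j, smulR₂, smulL₂, Complex.conj_ofReal, hb₂ip i j, hb₁ip i j]
    by_cases hij : i = j
    · subst hij
      rw [if_pos rfl, if_pos rfl, hip₁vv, hip₂vv]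
      have hsC2 : ((s : ℝ) : ℂ) * ((s : ℝ) : ℂ) * ((r₂ : ℝ) : ℂ) = ((r₁ : ℝ) : ℂ) := by
        rw [← Complex.ofReal_mul, hssq, ← Complex.ofReal_mul,
          div_mul_cancel₀ _ hr₂pos.ne']
      calc ((s : ℝ) : ℂ) * (((s : ℝ) : ℂ) * (((Nr q m i : ℝ) : ℂ) * ((r₂ : ℝ) : ℂ)))
          = ((s : ℝ) : ℂ) * ((s : ℝ) : ℂ) * ((r₂ : ℝ) : ℂ) * ((Nr q m i : ℝ) : ℂ) := by
            ring
        _ = ((r₁ : ℝ) : ℂ) * ((Nr q m i : ℝ) : ℂ) := by rw [hsC2]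
        _ = ((Nr q m i : ℝ) : ℂ) * ((r₁ : ℝ) : ℂ) := by ring
    · rw [if_neg hij, if_neg hij]
      ring
  have hstep1 : ∀ i (y : V₁), ip₂ (U (b₁ i)) (U y) = ip₁ (b₁ i) y := by
    intro i y
    have hy : y ∈ Submodule.span ℂ (Set.range b₁) := by
      rw [b₁.span_eq]; trivial
    refine Submodule.span_induction (p := fun y _ => ip₂ (U (b₁ i)) (U y) = ip₁ (b₁ i) y)
      (fun x hx => ?_) ?_ (fun x y' _ _ hx hy' => ?_) (fun a x _ hx => ?_) hy
    · obtain ⟨j, rfl⟩ := hx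
      exact hbase i j
    · show ip₂ (U (b₁ i)) (U 0) = ip₁ (b₁ i) 0
      rw [map_zero, zeroR₂, zeroR₁]
    · show ip₂ (U (b₁ i)) (U (x + y')) = ip₁ (b₁ i) (x + y')
      rw [map_add, addR₂, addR₁, hx, hy']
    · show ip₂ (U (b₁ i)) (U (a • x)) = ip₁ (b₁ i) (a • x)
      rw [map_smul, smulR₂, smulR₁, hx]
  intro x y
  have hx : x ∈ Submodule.span ℂ (Set.range b₁) := by
    rw [b₁.span_eq]; trivial
  refine Submodule.span_induction (p := fun x _ => ∀ y, ip₂ (U x) (U y) = ip₁ x y)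
    (fun x' hx' => ?_) ?_ (fun x' x'' _ _ h' h'' => ?_) (fun a x' _ h' => ?_) hx y
  · obtain ⟨i, rfl⟩ := hx'
    exact hstep1 i
  · intro y'
    show ip₂ (U 0) (U y') = ip₁ 0 y'
    rw [map_zero, zeroL₂, zeroL₁]
  · intro y'
    show ip₂ (U (x' + x'')) (U y') = ip₁ (x' + x'') y'
    rw [map_add, addL₂, addL₁, h' y', h'' y']
  · intro y'
    show ip₂ (U (a • x')) (U y') = ip₁ (a • x') y'
    rw [map_smul, smulL₂, smulL₁, h' y']

end LWC

namespace LWC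

theorem no_equiv_of_diff_weight {q : ℝ} (hq0 : 0 < q) (hq1 : q < 1)
    {V₁ : Type*} [AddCommGroup V₁] [Module ℂ V₁]
    {ip₁ : V₁ → V₁ → ℂ} {K₁ Kinv₁ F₁ Fs₁ : V₁ →ₗ[ℂ] V₁}
    {V₂ : Type*} [AddCommGroup V₂] [Module ℂ V₂]
    {ip₂ : V₂ → V₂ → ℂ} {K₂ Kinv₂ F₂ Fs₂ : V₂ →ₗ[ℂ] V₂}
    (h₁ : IsAdmRep q V₁ ip₁ K₁ Kinv₁ F₁ Fs₁)
    (h₂ : IsAdmRep q V₂ ip₂ K₂ Kinv₂ F₂ Fs₂)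
    (v₁ : V₁) (v₂ : V₂) (r₁ r₂ : ℝ) (hr : r₁ ≠ r₂)
    (hv₁ : v₁ ≠ 0) (hF₁ : F₁ v₁ = 0) (hK₁ : K₁ v₁ = (((q ^ (-r₁) : ℝ)) : ℂ) • v₁)
    (hv₂ : v₂ ≠ 0) (hF₂ : F₂ v₂ = 0) (hK₂ : K₂ v₂ = (((q ^ (-r₂) : ℝ)) : ℂ) • v₂) :
    ¬∃ U : V₁ ≃ₗ[ℂ] V₂,
      (∀ v, U (K₁ v) = K₂ (U v)) ∧ (∀ v, U (F₁ v) = F₂ (U v)) ∧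
      (∀ v, U (Fs₁ v) = Fs₂ (U v)) ∧
      (∀ v w, ip₂ (U v) (U w) = ip₁ v w) := by
  rintro ⟨U, hUK, hUF, hUFs, hUip⟩
  have hqne : q ≠ 0 := hq0.ne'
  have hlogq : Real.log q ≠ 0 := (Real.log_neg hq0 hq1).ne
  set m₂ : ℝ := q ^ (-r₂) with hm₂def
  have hm₂pos : 0 < m₂ := Real.rpow_pos_of_pos hq0 _
  obtain ⟨b₂, hb₂0, hb₂K, hb₂F0, hb₂F, hb₂Fs, hb₂ip⟩ :=
    rep_structure hq0 hq1 h₂ hv₂ hm₂pos.ne' hF₂ hK₂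
  set w : V₂ := U v₁ with hwdef
  have hw0 : w ≠ 0 := fun h => hv₁ ((LinearEquiv.map_eq_zero_iff U).mp h)
  have hFw : F₂ w = 0 := by rw [hwdef, ← hUF, hF₁, map_zero]
  have hKw : K₂ w = (((q ^ (-r₁) : ℝ)) : ℂ) • w := by
    rw [hwdef, ← hUK, hK₁, map_smul]
  set c := b₂.repr w with hcdef
  have hrepr : ∀ n, b₂.repr (K₂ w) n = ((q ^ (2 * n) * m₂ : ℝ) : ℂ) * c n := by
    intro n
    have hlin : (Finsupp.lapply n).comp (b₂.repr.toLinearMap.comp K₂) =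
        ((q ^ (2 * n) * m₂ : ℝ) : ℂ) • ((Finsupp.lapply n).comp b₂.repr.toLinearMap) := by
      refine Module.Basis.ext b₂ fun j => ?_
      simp only [LinearMap.comp_apply, LinearMap.smul_apply, LinearEquiv.coe_toLinearMap,
        hb₂K j, map_smul, Module.Basis.repr_self, Finsupp.lapply_apply, Finsupp.smul_apply,
        smul_eq_mul, Finsupp.single_apply]
      by_cases hjn : j = n
      · subst hjn; simp
      · simp [hjn]
    have := LinearMap.congr_fun hlin w
    simpa using this
  have coef : ∀ n, ((q ^ (2 * n) * m₂ : ℝ) : ℂ) * c n = (((q ^ (-r₁) : ℝ)) : ℂ) * c n := by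
    intro n
    rw [← hrepr n, hKw, map_smul]
    simp [hcdef]
  have hexp : ∀ j : ℕ, c j ≠ 0 → ((2 * j : ℕ) : ℝ) = r₂ - r₁ := by
    intro j hj
    have heqC := mul_right_cancel₀ hj (coef j)
    have heqR : q ^ (2 * j) * m₂ = q ^ (-r₁) := by exact_mod_cast heqC
    have hlog := congrArg Real.log heqR
    rw [Real.log_mul (pow_ne_zero _ hqne) hm₂pos.ne', Real.log_pow, hm₂def,
      Real.log_rpow hq0, Real.log_rpow hq0] at hlog
    have : (((2 * j : ℕ) : ℝ) + (-r₂) - (-r₁)) * Real.log q = 0 := by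
      push_cast at hlog ⊢
      linear_combination hlog
    have h0 := (mul_eq_zero.mp this).resolve_right hlogq
    linarith
  obtain ⟨n, hn⟩ : ∃ n, c n ≠ 0 := by
    by_contra hcon
    push_neg at hcon
    apply hw0
    apply (LinearEquiv.map_eq_zero_iff b₂.repr).mp
    exact Finsupp.ext hcon
  have hn_exp := hexp n hn
  have hnne : n ≠ 0 := by
    intro h0
    subst h0
    simp at hn_exp
    exact hr (by linarith)
  obtain ⟨k, rfl⟩ := Nat.exists_eq_succ_of_ne_zero hnne
  have honly : ∀ j, j ≠ k + 1 → c j = 0 := by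
    intro j hj
    by_contra hcj
    have := hexp j hcj
    rw [← hn_exp] at this
    have : (2 * j : ℕ) = 2 * (k + 1) := by exact_mod_cast this
    omega
  have hwn : b₂.repr w = Finsupp.single (k + 1) (c (k + 1)) := by
    refine Finsupp.ext fun j => ?_
    by_cases hj : j = k + 1
    · subst hj; simp [hcdef]
    · rw [Finsupp.single_apply, if_neg (fun h => hj h.symm)]
      exact honly j hj
  have hw : w = c (k + 1) • b₂ (k + 1) := by
    have h1 := congrArg b₂.repr.symm hwn
    rw [LinearEquiv.symm_apply_apply] at h1
    rw [h1]
    have h2 : Finsupp.single (k + 1) (c (k + 1)) = c (k + 1) • Finsupp.single (k + 1) (1 : ℂ) := by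
      rw [Finsupp.smul_single, smul_eq_mul, mul_one]
    rw [h2, map_smul, Module.Basis.repr_symm_single_one]
  have hfinal := hFw
  rw [hw, map_smul, hb₂F k, smul_smul] at hfinal
  rcases smul_eq_zero.mp hfinal with h3 | h3
  · rcases mul_eq_zero.mp h3 with h4 | h4
    · exact hn h4
    · have : lam q m₂ (k + 1) ≠ 0 := (lam_pos hq0 hq1 hm₂pos.ne' k).ne'
      exact this (by exact_mod_cast h4)
  · exact b₂.ne_zero k h3

end LWC

/-- In `π_r`, the vector `e_0` is a lowest weight vector: `F e_0 = 0` and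
`K e_0 = q^{-r} e_0`.  Moreover every irreducible admissible `*`-representation is
determined up to unitary equivalence by its lowest weight, and distinct lowest weights
`q^{-r₁} ≠ q^{-r₂}` (for `r₁ ≠ r₂`) give inequivalent representations. -/
theorem lowest_weight_classification (hq0 : 0 < q) (hq1 : q < 1) :
    (∀ r : ℝ, Fop q r (Finsupp.single 0 1) = 0 ∧
      Kop q r (Finsupp.single 0 1) = (((q ^ (-r) : ℝ) : ℂ)) • Finsupp.single 0 1) ∧
    (∀ (V₁ : Type) (_ : AddCommGroup V₁) (_ : Module ℂ V₁)
       (inner₁ : V₁ → V₁ → ℂ) (K₁ Kinv₁ F₁ Fs₁ : V₁ →ₗ[ℂ] V₁)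
       (V₂ : Type) (_ : AddCommGroup V₂) (_ : Module ℂ V₂)
       (inner₂ : V₂ → V₂ → ℂ) (K₂ Kinv₂ F₂ Fs₂ : V₂ →ₗ[ℂ] V₂),
      IsAdmRep q V₁ inner₁ K₁ Kinv₁ F₁ Fs₁ →
      IsAdmRep q V₂ inner₂ K₂ Kinv₂ F₂ Fs₂ →
      ∀ (v₁ : V₁) (v₂ : V₂) (μ : ℂ),
        v₁ ≠ 0 → F₁ v₁ = 0 → K₁ v₁ = μ • v₁ →
        v₂ ≠ 0 → F₂ v₂ = 0 → K₂ v₂ = μ • v₂ →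
        ∃ U : V₁ ≃ₗ[ℂ] V₂,
          (∀ v, U (K₁ v) = K₂ (U v)) ∧ (∀ v, U (F₁ v) = F₂ (U v)) ∧
          (∀ v, U (Fs₁ v) = Fs₂ (U v)) ∧
          (∀ v w, inner₂ (U v) (U w) = inner₁ v w)) ∧
    (∀ (V₁ : Type) (_ : AddCommGroup V₁) (_ : Module ℂ V₁)
       (inner₁ : V₁ → V₁ → ℂ) (K₁ Kinv₁ F₁ Fs₁ : V₁ →ₗ[ℂ] V₁)
       (V₂ : Type) (_ : AddCommGroup V₂) (_ : Module ℂ V₂)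
       (inner₂ : V₂ → V₂ → ℂ) (K₂ Kinv₂ F₂ Fs₂ : V₂ →ₗ[ℂ] V₂),
      IsAdmRep q V₁ inner₁ K₁ Kinv₁ F₁ Fs₁ →
      IsAdmRep q V₂ inner₂ K₂ Kinv₂ F₂ Fs₂ →
      ∀ (v₁ : V₁) (v₂ : V₂) (r₁ r₂ : ℝ), r₁ ≠ r₂ →
        v₁ ≠ 0 → F₁ v₁ = 0 → K₁ v₁ = (((q ^ (-r₁) : ℝ) : ℂ)) • v₁ →
        v₂ ≠ 0 → F₂ v₂ = 0 → K₂ v₂ = (((q ^ (-r₂) : ℝ) : ℂ)) • v₂ →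
        ¬∃ U : V₁ ≃ₗ[ℂ] V₂,
          (∀ v, U (K₁ v) = K₂ (U v)) ∧ (∀ v, U (F₁ v) = F₂ (U v)) ∧
          (∀ v, U (Fs₁ v) = Fs₂ (U v)) ∧
          (∀ v w, inner₂ (U v) (U w) = inner₁ v w)) := by
  refine ⟨?_, ?_, ?_⟩
  · intro r
    constructor
    · rw [Fop, Finsupp.lsum_single, LinearMap.toSpanSingleton_apply, one_smul]
      have h0 : Fcoef q r 0 = 0 := by
        simp [Fcoef]
      rw [h0]
      simp
    · rw [Kop, Finsupp.lsum_single, LinearMap.toSpanSingleton_apply, one_smul]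
      norm_num
  · intro V₁ _ _ inner₁ K₁ Kinv₁ F₁ Fs₁ V₂ _ _ inner₂ K₂ Kinv₂ F₂ Fs₂ h₁ h₂ v₁ v₂ μ
      hv₁ hF₁ hK₁ hv₂ hF₂ hK₂
    exact LWC.equiv_of_same_weight hq0 hq1 h₁ h₂ v₁ v₂ μ hv₁ hF₁ hK₁ hv₂ hF₂ hK₂
  · intro V₁ _ _ inner₁ K₁ Kinv₁ F₁ Fs₁ V₂ _ _ inner₂ K₂ Kinv₂ F₂ Fs₂ h₁ h₂ v₁ v₂ r₁ r₂ hr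
      hv₁ hF₁ hK₁ hv₂ hF₂ hK₂
    exact LWC.no_equiv_of_diff_weight hq0 hq1 h₁ h₂ v₁ v₂ r₁ r₂ hr hv₁ hF₁ hK₁ hv₂ hF₂ hK₂

end
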